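/- If a probability measure μ on ℝ is log-concave with continuous positive density f on (a,b) and distribution function F strictly increasing on (a,b), then the function I(p) = f(F^{−1}(p)) is concave on (0,1). -/

import Mathlib

open Set intervalIntegral

/-- Key inequality: if `f` is positive, continuous and log-concave on `[x,z]`,
`F' = f` there, `f x ≤ f y < f z`, then
`(F y - F x) * (f z - f y) ≤ (F z - F y) * (f y - f x)`. -/
lemma stmt7_key (f F : ℝ → ℝ) (x y z : ℝ) (hxy : x < y) (hyz : y < z)
    (hpos : ∀ u ∈ Set.Icc x z, 0 < f u)
    (hcont : ContinuousOn f (Set.Icc x z))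
    (hF : ∀ u ∈ Set.Icc x z, HasDerivAt F (f u) u)
    (hlc : ∀ u ∈ Set.Icc x z, ∀ w ∈ Set.Icc x z, ∀ t ∈ Set.Icc (0:ℝ) 1,
        f (t * u + (1 - t) * w) ≥ f u ^ t * f w ^ (1 - t))
    (h1 : f x ≤ f y) (h2 : f y < f z) :
    (F y - F x) * (f z - f y) ≤ (F z - F y) * (f y - f x) := by
  have hxz := hxy.trans hyz
  have hyI : y ∈ Set.Icc x z := ⟨hxy.le, hyz.le⟩
  have hxI : x ∈ Set.Icc x z := ⟨le_refl x, hxz.le⟩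
  have hzI : z ∈ Set.Icc x z := ⟨hxz.le, le_refl z⟩
  have hfy := hpos y hyI
  have hfx := hpos x hxI
  have hfz := hpos z hzI
  have hzy : (0:ℝ) < z - y := sub_pos.2 hyz
  have hzy' : z - y ≠ 0 := ne_of_gt hzy
  set c : ℝ := (Real.log (f z) - Real.log (f y)) / (z - y) with hc_def
  have hc : 0 < c := div_pos (sub_pos.2 (Real.log_lt_log hfy h2)) hzy
  have hc' : c ≠ 0 := ne_of_gt hc
  -- Claim 1 : on [y,z], f dominates the exponential model
  have claim1 : ∀ v ∈ Set.Icc y z, f y * Real.exp (c * (v - y)) ≤ f v := by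
    intro v hv
    set t : ℝ := (z - v) / (z - y) with ht_def
    have ht : t ∈ Set.Icc (0:ℝ) 1 := ⟨div_nonneg (by linarith [hv.2]) hzy.le,
      (div_le_one hzy).2 (by linarith [hv.1])⟩
    have hrepr : t * y + (1 - t) * z = v := by
      rw [ht_def]; field_simp; ring
    have h := hlc y hyI z hzI t ht
    rw [hrepr] at h
    refine le_trans (le_of_eq ?_) h
    have e1 : f y * Real.exp (c * (v - y)) = Real.exp (Real.log (f y) + c * (v - y)) := by
      rw [Real.exp_add, Real.exp_log hfy]
    rw [e1, Real.rpow_def_of_pos hfy, Real.rpow_def_of_pos hfz, ← Real.exp_add]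
    congr 1
    rw [hc_def, ht_def]
    field_simp
    ring
  -- Claim 2 : on [x,y], f is dominated by the exponential model
  have claim2 : ∀ u ∈ Set.Icc x y, f u ≤ f y * Real.exp (c * (u - y)) := by
    intro u hu
    have hzu : (0:ℝ) < z - u := by linarith [hu.2]
    have huI : u ∈ Set.Icc x z := ⟨hu.1, by linarith [hu.2]⟩
    have hfu := hpos u huI
    set t : ℝ := (z - y) / (z - u) with ht_def
    have ht : t ∈ Set.Icc (0:ℝ) 1 := ⟨div_nonneg hzy.le hzu.le,
      (div_le_one hzu).2 (by linarith [hu.2])⟩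
    have hrepr : t * u + (1 - t) * z = y := by
      rw [ht_def]; field_simp; ring
    have h := hlc u huI z hzI t ht
    rw [hrepr] at h
    have hlog : t * Real.log (f u) + (1 - t) * Real.log (f z) ≤ Real.log (f y) := by
      have hl := Real.log_le_log (by positivity) h
      rwa [Real.log_mul (ne_of_gt (Real.rpow_pos_of_pos hfu t))
        (ne_of_gt (Real.rpow_pos_of_pos hfz (1 - t))), Real.log_rpow hfu,
        Real.log_rpow hfz] at hl
    have hlog' : (z - y) * Real.log (f u) + (y - u) * Real.log (f z)
        ≤ (z - u) * Real.log (f y) := by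
      have h2' := mul_le_mul_of_nonneg_left hlog hzu.le
      have e1 : (z - u) * (t * Real.log (f u) + (1 - t) * Real.log (f z))
          = (z - y) * Real.log (f u) + (y - u) * Real.log (f z) := by
        rw [ht_def]; field_simp; ring
      linarith [e1 ▸ h2']
    have e1 : f y * Real.exp (c * (u - y)) = Real.exp (Real.log (f y) + c * (u - y)) := by
      rw [Real.exp_add, Real.exp_log hfy]
    rw [e1, ← Real.exp_log hfu]
    apply Real.exp_le_exp.2
    rw [hc_def, ← sub_le_iff_le_add', div_mul_eq_mul_div, le_div_iff₀ hzy]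
    nlinarith [hlog']
  -- integrability and FTC helpers
  have hint_f : ∀ u v : ℝ, u ∈ Set.Icc x z → v ∈ Set.Icc x z →
      IntervalIntegrable f MeasureTheory.volume u v := by
    intro u v hu hv
    exact (hcont.mono (Set.uIcc_subset_Icc hu hv)).intervalIntegrable
  have hFTC : ∀ u v : ℝ, u ∈ Set.Icc x z → v ∈ Set.Icc x z →
      (∫ w in u..v, f w) = F v - F u := by
    intro u v hu hv
    exact intervalIntegral.integral_eq_sub_of_hasDerivAt
      (fun w hw => hF w (Set.uIcc_subset_Icc hu hv hw)) (hint_f u v hu hv)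
  have hmodel : ∀ u v : ℝ, (∫ w in u..v, f y * Real.exp (c * (w - y)))
      = f y / c * (Real.exp (c * (v - y)) - Real.exp (c * (u - y))) := by
    intro u v
    have hd : ∀ w ∈ Set.uIcc u v,
        HasDerivAt (fun w => f y / c * Real.exp (c * (w - y)))
          (f y * Real.exp (c * (w - y))) w := by
      intro w _
      have h1 : HasDerivAt (fun w : ℝ => c * (w - y)) c w := by
        simpa using ((hasDerivAt_id w).sub_const y).const_mul c
      have h3 := (h1.exp).const_mul (f y / c)
      exact h3.congr_deriv (by rw [mul_comm (Real.exp _) c, ← mul_assoc, div_mul_cancel₀ _ hc'])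
    have hcm : Continuous (fun w : ℝ => f y * Real.exp (c * (w - y))) :=
      continuous_const.mul
        (Real.continuous_exp.comp (continuous_const.mul (continuous_id.sub continuous_const)))
    rw [intervalIntegral.integral_eq_sub_of_hasDerivAt hd (hcm.intervalIntegrable u v)]
    ring
  have hmint : ∀ u v : ℝ, IntervalIntegrable (fun w => f y * Real.exp (c * (w - y)))
      MeasureTheory.volume u v := fun u v =>
    (continuous_const.mul
      (Real.continuous_exp.comp (continuous_const.mul (continuous_id.sub continuous_const)))).intervalIntegrable u v
  -- lower bound on F z - F y
  have hez : Real.exp (c * (z - y)) = f z / f y := by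
    have : c * (z - y) = Real.log (f z) - Real.log (f y) := by
      rw [hc_def]; field_simp
    rw [this, Real.exp_sub, Real.exp_log hfz, Real.exp_log hfy]
  have hB : (f z - f y) / c ≤ F z - F y := by
    rw [← hFTC y z hyI hzI]
    have hle := intervalIntegral.integral_mono_on hyz.le (hmint y z)
      (hint_f y z hyI hzI) claim1
    rw [hmodel y z] at hle
    have e0 : c * (y - y) = 0 := by ring
    rw [hez, e0, Real.exp_zero] at hle
    have : f y / c * (f z / f y - 1) = (f z - f y) / c := by
      field_simp
    linarith [this ▸ hle]
  -- upper bound on F y - F x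
  have hA : F y - F x ≤ (f y - f x) / c := by
    rw [← hFTC x y hxI hyI]
    have hle := intervalIntegral.integral_mono_on hxy.le (hint_f x y hxI hyI)
      (hmint x y) claim2
    rw [hmodel x y] at hle
    have e0 : c * (y - y) = 0 := by ring
    rw [e0, Real.exp_zero] at hle
    have hex : f x / f y ≤ Real.exp (c * (x - y)) := by
      rw [div_le_iff₀ hfy]
      have := claim2 x ⟨le_refl x, hxy.le⟩
      linarith [this]
    have h0 : (0:ℝ) < f y / c := div_pos hfy hc
    have hid : f y / c * (1 - f x / f y) = (f y - f x) / c := by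
      field_simp
    nlinarith [hle, hex, h0, hid]
  -- combine
  have hfyx : 0 ≤ f y - f x := by linarith
  have hfzy : 0 < f z - f y := by linarith
  calc (F y - F x) * (f z - f y) ≤ ((f y - f x) / c) * (f z - f y) :=
        mul_le_mul_of_nonneg_right hA hfzy.le
    _ = (f y - f x) * ((f z - f y) / c) := by ring
    _ ≤ (f y - f x) * (F z - F y) := mul_le_mul_of_nonneg_left hB hfyx
    _ = (F z - F y) * (f y - f x) := by ring

/-- The three-point inequality for log-concave densities. -/
lemma stmt7_main (f F : ℝ → ℝ) (x y z : ℝ) (hxy : x < y) (hyz : y < z)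
    (hpos : ∀ u ∈ Set.Icc x z, 0 < f u)
    (hcont : ContinuousOn f (Set.Icc x z))
    (hF : ∀ u ∈ Set.Icc x z, HasDerivAt F (f u) u)
    (hlc : ∀ u ∈ Set.Icc x z, ∀ w ∈ Set.Icc x z, ∀ t ∈ Set.Icc (0:ℝ) 1,
        f (t * u + (1 - t) * w) ≥ f u ^ t * f w ^ (1 - t)) :
    0 ≤ (F y - F x) * (f y - f z) + (F z - F y) * (f y - f x) := by
  have hxz := hxy.trans hyz
  have hyI : y ∈ Set.Icc x z := ⟨hxy.le, hyz.le⟩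
  have hxI : x ∈ Set.Icc x z := ⟨le_refl x, hxz.le⟩
  have hzI : z ∈ Set.Icc x z := ⟨hxz.le, le_refl z⟩
  -- f y is at least min (f x) (f z)
  have hmin : min (f x) (f z) ≤ f y := by
    have hzx : (0:ℝ) < z - x := sub_pos.2 hxz
    set t : ℝ := (z - y) / (z - x) with ht_def
    have ht : t ∈ Set.Icc (0:ℝ) 1 := ⟨div_nonneg (by linarith) hzx.le,
      (div_le_one hzx).2 (by linarith)⟩
    have hrepr : t * x + (1 - t) * z = y := by
      rw [ht_def]; field_simp; ring
    have h := hlc x hxI z hzI t ht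
    rw [hrepr] at h
    have hm : 0 < min (f x) (f z) := lt_min (hpos x hxI) (hpos z hzI)
    calc min (f x) (f z) = min (f x) (f z) ^ t * min (f x) (f z) ^ (1 - t) := by
          rw [← Real.rpow_add hm]; simp
      _ ≤ f x ^ t * f z ^ (1 - t) := by
          apply mul_le_mul (Real.rpow_le_rpow hm.le (min_le_left _ _) ht.1)
            (Real.rpow_le_rpow hm.le (min_le_right _ _) (by linarith [ht.2]))
            (Real.rpow_nonneg hm.le _) (Real.rpow_nonneg (hpos x hxI).le _)
      _ ≤ f y := h
  rcases lt_or_ge (f y) (f z) with hz' | hz'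
  · -- increasing side: f x ≤ f y < f z, use key directly
    have hx' : f x ≤ f y := by
      by_contra h
      push_neg at h
      exact absurd hmin (not_le.2 (lt_min h hz'))
    have hkey := stmt7_key f F x y z hxy hyz hpos hcont hF hlc hx' hz'
    nlinarith [hkey]
  · rcases lt_or_ge (f y) (f x) with hx' | hx'
    · -- decreasing side: reflect
      have hkey := stmt7_key (fun u => f (-u)) (fun u => -F (-u)) (-z) (-y) (-x)
        (by linarith) (by linarith)
        (fun u hu => hpos (-u) ⟨by linarith [hu.2], by linarith [hu.1]⟩)
        (by
          have : ContinuousOn (fun u : ℝ => f (-u)) (Set.Icc (-z) (-x)) := by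
            apply hcont.comp continuousOn_neg
            intro u hu
            exact ⟨by linarith [hu.2], by linarith [hu.1]⟩
          exact this)
        (fun u hu => by
          have h1 := hF (-u) ⟨by linarith [hu.2], by linarith [hu.1]⟩
          have h2 := h1.comp u (hasDerivAt_neg u)
          have h3 := h2.neg
          exact h3.congr_deriv (by ring))
        (fun u hu w hw t ht => by
          have huI : -u ∈ Set.Icc x z := ⟨by linarith [hu.2], by linarith [hu.1]⟩
          have hwI : -w ∈ Set.Icc x z := ⟨by linarith [hw.2], by linarith [hw.1]⟩
          have h := hlc (-u) huI (-w) hwI t ht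
          have e : t * (-u) + (1 - t) * (-w) = -(t * u + (1 - t) * w) := by ring
          rw [e] at h
          exact h)
        (by simpa using hz')
        (by simpa using hx')
      simp only [neg_neg] at hkey
      nlinarith [hkey]
    · -- f y is a max: both terms are nonneg; need F monotone
      have hFm : ∀ u v : ℝ, u ∈ Set.Icc x z → v ∈ Set.Icc x z → u ≤ v → F u ≤ F v := by
        intro u v hu hv huv
        have hFTC := intervalIntegral.integral_eq_sub_of_hasDerivAt
          (fun w hw => hF w (Set.uIcc_subset_Icc hu hv hw))
          ((hcont.mono (Set.uIcc_subset_Icc hu hv)).intervalIntegrable)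
        have hnn : 0 ≤ ∫ w in u..v, f w := by
          apply intervalIntegral.integral_nonneg huv
          intro w hw
          exact (hpos w ⟨le_trans hu.1 hw.1, le_trans hw.2 hv.2⟩).le
        linarith [hFTC ▸ hnn]
      have h1 := hFm x y hxI hyI hxy.le
      have h2 := hFm y z hyI hzI hyz.le
      have := mul_nonneg (by linarith : (0:ℝ) ≤ F y - F x) (by linarith : (0:ℝ) ≤ f y - f z)
      have := mul_nonneg (by linarith : (0:ℝ) ≤ F z - F y) (by linarith : (0:ℝ) ≤ f y - f x)
      linarith

/-- If a log-concave probability measure on ℝ has a continuous positive density `f`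
on `(a,b)` with distribution function `F` strictly increasing on `(a,b)`, then
`I(p) = f(F⁻¹(p))` is concave on `(0,1)`. -/
theorem stmt_7 (f F Finv : ℝ → ℝ) (a b : ℝ) (hab : a < b)
    (hf_cont : ContinuousOn f (Set.Ioo a b))
    (hf_pos : ∀ x ∈ Set.Ioo a b, 0 < f x)
    (hf_nn : ∀ x, 0 ≤ f x)
    (hf_meas : Measurable f)
    (hdens : ∫ x, f x = 1)
    (hsupp : ∀ x ∉ Set.Ioo a b, f x = 0)
    (hlc : ∀ x ∈ Set.Ioo a b, ∀ y ∈ Set.Ioo a b, ∀ t ∈ Set.Icc (0:ℝ) 1,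
        f (t * x + (1 - t) * y) ≥ f x ^ t * f y ^ (1 - t))
    (hF : ∀ x ∈ Set.Ioo a b, HasDerivAt F (f x) x)
    (hFmono : StrictMonoOn F (Set.Ioo a b))
    (hmaps : ∀ p ∈ Set.Ioo (0:ℝ) 1, Finv p ∈ Set.Ioo a b ∧ F (Finv p) = p)
    (hmaps' : ∀ x ∈ Set.Ioo a b, F x ∈ Set.Ioo (0:ℝ) 1 ∧ Finv (F x) = x) :
    ConcaveOn ℝ (Set.Ioo (0:ℝ) 1) (fun p => f (Finv p)) := by
  have helper : ∀ p ∈ Set.Ioo (0:ℝ) 1, ∀ q ∈ Set.Ioo (0:ℝ) 1, p < q →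
      ∀ s t : ℝ, 0 < s → 0 < t → s + t = 1 →
      s * f (Finv p) + t * f (Finv q) ≤ f (Finv (s * p + t * q)) := by
    intro p hp q hq hpq s t hs ht hst
    obtain ⟨hx, hFx⟩ := hmaps p hp
    obtain ⟨hz, hFz⟩ := hmaps q hq
    set m : ℝ := s * p + t * q with hm_def
    have hqp : (0:ℝ) < q - p := sub_pos.2 hpq
    have hsp : s * p + t * p = p := by linear_combination p * hst
    have hsq : s * q + t * q = q := by linear_combination q * hst
    have hpm : p < m := by
      rw [hm_def]
      linarith [mul_pos ht hqp]
    have hmq : m < q := by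
      rw [hm_def]
      linarith [mul_pos hs hqp]
    have hm : m ∈ Set.Ioo (0:ℝ) 1 := ⟨lt_trans hp.1 hpm, lt_trans hmq hq.2⟩
    obtain ⟨hy, hFy⟩ := hmaps m hm
    have h1 : Finv p < Finv m :=
      (hFmono.lt_iff_lt hx hy).1 (by rw [hFx, hFy]; exact hpm)
    have h2 : Finv m < Finv q :=
      (hFmono.lt_iff_lt hy hz).1 (by rw [hFy, hFz]; exact hmq)
    have hsub : Set.Icc (Finv p) (Finv q) ⊆ Set.Ioo a b := Set.Icc_subset_Ioo hx.1 hz.2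
    have hmain := stmt7_main f F (Finv p) (Finv m) (Finv q) h1 h2
      (fun u hu => hf_pos u (hsub hu)) (hf_cont.mono hsub)
      (fun u hu => hF u (hsub hu))
      (fun u hu w hw t' ht' => hlc u (hsub hu) w (hsub hw) t' ht')
    rw [hFx, hFy, hFz] at hmain
    have e1 : m - p = t * (q - p) := by linear_combination p * hst
    have e2 : q - m = s * (q - p) := by linear_combination (-q) * hst
    rw [e1, e2] at hmain
    have h3 : 0 ≤ t * (f (Finv m) - f (Finv q)) + s * (f (Finv m) - f (Finv p)) := by
      refine (mul_le_mul_iff_right₀ hqp).mp ?_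
      nlinarith [hmain]
    have e3 : s * f (Finv m) + t * f (Finv m) = f (Finv m) := by
      linear_combination f (Finv m) * hst
    linarith [h3, e3]
  constructor
  · exact convex_Ioo 0 1
  · intro p hp q hq s t hs ht hst
    simp only [smul_eq_mul]
    rcases eq_or_lt_of_le hs with hs0 | hs0
    · have ht1 : t = 1 := by linarith
      rw [← hs0, ht1]
      norm_num
    rcases eq_or_lt_of_le ht with ht0 | ht0
    · have hs1 : s = 1 := by linarith
      rw [← ht0, hs1]
      norm_num
    rcases lt_trichotomy p q with hpq | hpq | hpq
    · exact helper p hp q hq hpq s t hs0 ht0 hst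
    · subst hpq
      have e : s * p + t * p = p := by linear_combination p * hst
      rw [e]
      have e4 : s * f (Finv p) + t * f (Finv p) = f (Finv p) := by
        linear_combination f (Finv p) * hst
      linarith
    · have h := helper q hq p hp hpq t s ht0 hs0 (by linarith)
      have e : s * p + t * q = t * q + s * p := by ring
      rw [e]
      linarith
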